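/- Let (S, 𝒮) be a measurable space, κ a Markov kernel on S, and μ a κ-invariant probability measure on S, i.e. μ(A) = ∫_S κ(θ, A) μ(dθ) for every A ∈ 𝒮. Let ν : S → ℝ be bounded and measurable and h : S → ℝ be measurable and μ-integrable, where (κν)(θ) = ∫_S ν dκ(θ,·). If sup_{θ∈S} ((κν)(θ) − ν(θ) + h(θ)) < 0, then ∫_S h dμ < 0. -/

import Mathlib

open MeasureTheory ProbabilityTheory

/-- Let `κ` be a Markov kernel on `S` and `μ` a `κ`-invariant
probability measure, i.e. `μ(A) = ∫ κ(θ,A) μ(dθ)` for every measurable `A`.  Let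
`ν : S → ℝ` be bounded measurable and `h : S → ℝ` measurable and `μ`-integrable.
If `sup_θ ((κν)(θ) − ν(θ) + h(θ)) < 0`, then `∫ h dμ < 0`. -/
theorem stmt8 {S : Type*} [MeasurableSpace S] (κ : Kernel S S) [IsMarkovKernel κ]
    (μ : Measure S) [IsProbabilityMeasure μ]
    (hinv : ∀ A : Set S, MeasurableSet A → μ A = ∫⁻ θ, κ θ A ∂μ)
    (ν : S → ℝ) (hν : Measurable ν) (Cν : ℝ) (hνb : ∀ θ, |ν θ| ≤ Cν)
    (h : S → ℝ) (hh : Measurable h) (hint : Integrable h μ)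
    (hsup : ∃ c : ℝ, c < 0 ∧ ∀ θ, (∫ s, ν s ∂(κ θ)) - ν θ + h θ ≤ c) :
    ∫ θ, h θ ∂μ < 0 := by
  obtain ⟨c, hc, hbd⟩ := hsup
  -- μ is the bind of μ with κ
  have hbind : μ = Measure.bind μ (fun θ => κ θ) := by
    ext A hA
    rw [Measure.bind_apply hA (κ.measurable.aemeasurable), hinv A hA]
  set g : S → ℝ := fun s => ν s + Cν with hg
  have hgnn : ∀ s, 0 ≤ g s := fun s => by
    have := (abs_le.mp (hνb s)).1; simp [hg]; linarith
  set fE : S → ENNReal := fun s => ENNReal.ofReal (g s) with hfE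
  have hfEm : Measurable fE := (hν.add measurable_const).ennreal_ofReal
  have hνint : ∀ (m : Measure S) [IsProbabilityMeasure m], Integrable ν m := by
    intro m _
    exact (integrable_const Cν).mono' hν.aestronglyMeasurable (ae_of_all _ hνb)
  -- for any probability measure m: ∫ ν dm = (∫⁻ fE dm).toReal - Cν
  have key : ∀ (m : Measure S) [IsProbabilityMeasure m],
      ∫ s, ν s ∂m = (∫⁻ s, fE s ∂m).toReal - Cν := by
    intro m _
    have h1 : ∫ s, g s ∂m = (∫⁻ s, fE s ∂m).toReal := by
      rw [integral_eq_lintegral_of_nonneg_ae (ae_of_all _ hgnn)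
        (hν.add measurable_const).aestronglyMeasurable]
    have h2 : ∫ s, g s ∂m = ∫ s, ν s ∂m + Cν := by
      rw [hg]
      rw [integral_add (hνint m) (integrable_const Cν), integral_const]
      simp
    linarith
  -- L θ := ∫⁻ fE dκθ
  set L : S → ENNReal := fun θ => ∫⁻ s, fE s ∂(κ θ) with hL
  have hLm : Measurable L := Measurable.lintegral_kernel (hfEm)
  have hLbd : ∀ θ, L θ ≤ ENNReal.ofReal (2 * Cν) := by
    intro θ
    calc L θ ≤ ∫⁻ _, ENNReal.ofReal (2 * Cν) ∂(κ θ) := by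
          refine lintegral_mono fun s => ENNReal.ofReal_le_ofReal ?_
          have := (abs_le.mp (hνb s)).2; simp [hg]; linarith
      _ = ENNReal.ofReal (2 * Cν) := by simp
  have hLlt : ∀ θ, L θ < ⊤ := fun θ => lt_of_le_of_lt (hLbd θ) ENNReal.ofReal_lt_top
  -- lintegral of fE is invariant
  have hlinv : ∫⁻ θ, L θ ∂μ = ∫⁻ s, fE s ∂μ := by
    conv_rhs => rw [hbind]
    rw [Measure.lintegral_bind (κ.measurable.aemeasurable) hfEm.aemeasurable]
  -- ∫ κν dμ = ∫ ν dμ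
  have hκν : ∀ θ, (∫ s, ν s ∂(κ θ)) = (L θ).toReal - Cν := fun θ => key (κ θ)
  have htoReal : ∫ θ, (L θ).toReal ∂μ = (∫⁻ θ, L θ ∂μ).toReal :=
    integral_toReal hLm.aemeasurable (ae_of_all _ hLlt)
  have hLint : Integrable (fun θ => (L θ).toReal) μ := by
    refine (integrable_const (max (2 * Cν) 0)).mono'
      (hLm.ennreal_toReal).aestronglyMeasurable (ae_of_all _ fun θ => ?_)
    rw [Real.norm_eq_abs, abs_of_nonneg ENNReal.toReal_nonneg]
    calc (L θ).toReal ≤ (ENNReal.ofReal (2 * Cν)).toReal :=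
          ENNReal.toReal_mono ENNReal.ofReal_ne_top (hLbd θ)
      _ = max (2 * Cν) 0 := ENNReal.toReal_ofReal'
  have hκνint : Integrable (fun θ => ∫ s, ν s ∂(κ θ)) μ := by
    simp_rw [hκν]
    exact hLint.sub (integrable_const Cν)
  have hmain : ∫ θ, (∫ s, ν s ∂(κ θ)) ∂μ = ∫ θ, ν θ ∂μ := by
    simp_rw [hκν]
    rw [integral_sub hLint (integrable_const Cν), htoReal, hlinv, integral_const]
    rw [key μ]
    simp
  -- conclude
  have hint2 : Integrable (fun θ => c + ν θ - (∫ s, ν s ∂(κ θ))) μ :=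
    ((integrable_const c).add (hνint μ)).sub hκνint
  have hmono : ∫ θ, h θ ∂μ ≤ ∫ θ, (c + ν θ - (∫ s, ν s ∂(κ θ))) ∂μ := by
    refine integral_mono hint hint2 fun θ => ?_
    have := hbd θ; dsimp; linarith
  have : ∫ θ, (c + ν θ - (∫ s, ν s ∂(κ θ))) ∂μ = c := by
    have hfint : Integrable (fun θ => c + ν θ) μ :=
      (integrable_const c).add (hνint μ)
    have hsub : Integrable (fun θ => ν θ - (∫ s, ν s ∂(κ θ))) μ :=
      (hνint μ).sub hκνint
    have e1 : ∫ θ, (c + ν θ - (∫ s, ν s ∂(κ θ))) ∂μ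
        = ∫ θ, (c + ν θ) ∂μ - ∫ θ, (∫ s, ν s ∂(κ θ)) ∂μ :=
      integral_sub hfint hκνint
    have e2 : ∫ θ, (c + ν θ) ∂μ = ∫ θ, (c : ℝ) ∂μ + ∫ θ, ν θ ∂μ :=
      integral_add (integrable_const c) (hνint μ)
    rw [e1, e2, hmain, integral_const]
    simp
  linarith
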